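/- Let Graph denote the category whose objects are (bundled) simple graphs and whose morphisms are graph maps, with the evident identities and composition. There is no model category structure on Graph (in the sense of Quillen: classes of weak equivalences, fibrations, and cofibrations satisfying the model category axioms) in which the class of weak equivalences is exactly the class of A-homotopy equivalences. -/

import Mathlib

open CategoryTheory

universe u v

/-- The path graph `I_N` on vertices `{0, 1, …, N}`, with `i` adjacent to `j` iff `|i - j| = 1`. -/
def pathG (N : ℕ) : SimpleGraph (Fin (N + 1)) where
  Adj i j := (i : ℕ) + 1 = (j : ℕ) ∨ (j : ℕ) + 1 = (i : ℕ)
  symm := ⟨fun i j h => h.symm⟩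
  loopless := ⟨fun i h => by rcases h with h | h <;> omega⟩

/-- A graph map `f : G → H`: for adjacent `u v` in `G`, either `f u = f v` or
`f u, f v` are adjacent in `H`. -/
def IsGraphMap {V W : Type*} (G : SimpleGraph V) (H : SimpleGraph W) (f : V → W) : Prop :=
  ∀ ⦃u v⦄, G.Adj u v → f u = f v ∨ H.Adj (f u) (f v)

/-- An object of the category `Graph`: a bundled simple graph. -/
structure GraphCat : Type 1 where
  V : Type
  graph : SimpleGraph V

/-- A morphism of bundled simple graphs: a graph map. -/
@[ext]
structure GraphHom (X Y : GraphCat) where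
  toFun : X.V → Y.V
  isGraphMap : IsGraphMap X.graph Y.graph toFun

/-- The category of simple graphs and graph maps. -/
instance : Category GraphCat where
  Hom := GraphHom
  id X := ⟨id, fun _ _ h => Or.inr h⟩
  comp f g :=
    ⟨g.toFun ∘ f.toFun, fun u v h => by
      rcases f.isGraphMap h with h' | h'
      · exact Or.inl (congrArg g.toFun h')
      · exact g.isGraphMap h'⟩
  id_comp f := rfl
  comp_id f := rfl
  assoc f g h := rfl

/-- Graph maps `f, g : G → H` are A-homotopic if there are `N` and a graph map
`α : G □ I_N → H` with `α (-, 0) = f` and `α (-, N) = g`. -/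
def AHomotopic {X Y : GraphCat} (f g : X ⟶ Y) : Prop :=
  ∃ (N : ℕ) (α : X.V × Fin (N + 1) → Y.V),
    IsGraphMap (X.graph.boxProd (pathG N)) Y.graph α ∧
    (∀ v, α (v, 0) = f.toFun v) ∧ (∀ v, α (v, Fin.last N) = g.toFun v)

/-- A graph map `f : G → H` is an A-homotopy equivalence if it has an inverse up to
A-homotopy. -/
def IsAHomotopyEquiv {X Y : GraphCat} (f : X ⟶ Y) : Prop :=
  ∃ g : Y ⟶ X, AHomotopic (f ≫ g) (𝟙 X) ∧ AHomotopic (g ≫ f) (𝟙 Y)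

/-- `f` is a retract of `g` in the arrow category. -/
def IsRetractMor {C : Type u} [Category.{v} C] {X Y X' Y' : C} (f : X ⟶ Y) (g : X' ⟶ Y') : Prop :=
  ∃ (i : X ⟶ X') (r : X' ⟶ X) (j : Y ⟶ Y') (s : Y' ⟶ Y),
    i ≫ r = 𝟙 X ∧ j ≫ s = 𝟙 Y ∧ i ≫ g = f ≫ j ∧ g ≫ s = r ≫ f

/-- A model category structure in the sense of Quillen: classes of weak equivalences, fibrations
and cofibrations on a category with finite limits and colimits, satisfying two-out-of-three,
closure under retracts, lifting, and factorization. -/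
structure ModelStructure (C : Type u) [Category.{v} C] where
  weq : MorphismProperty C
  fib : MorphismProperty C
  cof : MorphismProperty C
  hasFiniteLimits : Limits.HasFiniteLimits C
  hasFiniteColimits : Limits.HasFiniteColimits C
  weq_comp : ∀ {X Y Z : C} (f : X ⟶ Y) (g : Y ⟶ Z), weq f → weq g → weq (f ≫ g)
  weq_of_comp_left : ∀ {X Y Z : C} (f : X ⟶ Y) (g : Y ⟶ Z), weq f → weq (f ≫ g) → weq g
  weq_of_comp_right : ∀ {X Y Z : C} (f : X ⟶ Y) (g : Y ⟶ Z), weq g → weq (f ≫ g) → weq f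
  weq_retract : ∀ {X Y X' Y' : C} (f : X ⟶ Y) (g : X' ⟶ Y'),
    IsRetractMor f g → weq g → weq f
  fib_retract : ∀ {X Y X' Y' : C} (f : X ⟶ Y) (g : X' ⟶ Y'),
    IsRetractMor f g → fib g → fib f
  cof_retract : ∀ {X Y X' Y' : C} (f : X ⟶ Y) (g : X' ⟶ Y'),
    IsRetractMor f g → cof g → cof f
  lift_cof_trivFib : ∀ {A B X Y : C} (i : A ⟶ B) (p : X ⟶ Y), cof i → fib p → weq p →
    ∀ (u : A ⟶ X) (v : B ⟶ Y), u ≫ p = i ≫ v → ∃ l : B ⟶ X, i ≫ l = u ∧ l ≫ p = v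
  lift_trivCof_fib : ∀ {A B X Y : C} (i : A ⟶ B) (p : X ⟶ Y), cof i → weq i → fib p →
    ∀ (u : A ⟶ X) (v : B ⟶ Y), u ≫ p = i ≫ v → ∃ l : B ⟶ X, i ≫ l = u ∧ l ≫ p = v
  fact_cof_trivFib : ∀ {X Y : C} (f : X ⟶ Y),
    ∃ (Z : C) (i : X ⟶ Z) (p : Z ⟶ Y), cof i ∧ fib p ∧ weq p ∧ i ≫ p = f
  fact_trivCof_fib : ∀ {X Y : C} (f : X ⟶ Y),
    ∃ (Z : C) (i : X ⟶ Z) (p : Z ⟶ Y), cof i ∧ weq i ∧ fib p ∧ i ≫ p = f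

/-! ### Auxiliary material for the proof -/

namespace NoModelAux

/-- The graph with no edges on a vertex type. -/
def noAdj (V : Type) : SimpleGraph V where
  Adj _ _ := False
  symm := ⟨fun _ _ h => h.elim⟩
  loopless := ⟨fun _ h => h⟩

/-- The empty graph. -/
def O : GraphCat := ⟨Empty, noAdj Empty⟩
/-- The one-point graph. -/
def pt : GraphCat := ⟨PUnit, noAdj PUnit⟩
/-- The two-point discrete graph. -/
def D2 : GraphCat := ⟨Bool, noAdj Bool⟩
/-- The path graph of length `m` as an object. -/
def IM (m : ℕ) : GraphCat := ⟨Fin (m + 1), pathG m⟩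

/-- The infinite path graph on `ℤ`. -/
def zGraph : SimpleGraph ℤ where
  Adj a b := a + 1 = b ∨ b + 1 = a
  symm := ⟨fun _ _ h => h.symm⟩
  loopless := ⟨fun a h => by rcases h with h | h <;> omega⟩

def ZY : GraphCat := ⟨ℤ, zGraph⟩

lemma zAdj_iff {a b : ℤ} : zGraph.Adj a b ↔ (a + 1 = b ∨ b + 1 = a) := Iff.rfl

lemma zAdj_ne {a b : ℤ} (h : a + 1 = b ∨ b + 1 = a) : a ≠ b := by omega

lemma pathG_adj_iff {m : ℕ} {a b : Fin (m + 1)} :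
    (pathG m).Adj a b ↔ ((a : ℕ) + 1 = (b : ℕ) ∨ (b : ℕ) + 1 = (a : ℕ)) := Iff.rfl

/-- The strong-product-style graph on `ℤ × ℤ` (the categorical product graph). -/
def z2Graph : SimpleGraph (ℤ × ℤ) where
  Adj p q := ((p.1 = q.1 ∨ zGraph.Adj p.1 q.1) ∧ (p.2 = q.2 ∨ zGraph.Adj p.2 q.2)) ∧ p ≠ q
  symm := by
    constructor
    intro p q h
    obtain ⟨⟨h1, h2⟩, h3⟩ := h
    exact ⟨⟨h1.imp Eq.symm (fun hh => hh.symm), h2.imp Eq.symm (fun hh => hh.symm)⟩,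
      fun hc => h3 hc.symm⟩
  loopless := ⟨fun p h => h.2 rfl⟩

def ZY2 : GraphCat := ⟨ℤ × ℤ, z2Graph⟩

lemma z2Adj_iff {p q : ℤ × ℤ} :
    z2Graph.Adj p q ↔
      ((p.1 = q.1 ∨ zGraph.Adj p.1 q.1) ∧ (p.2 = q.2 ∨ zGraph.Adj p.2 q.2)) ∧ p ≠ q := Iff.rfl

/-! #### Basic morphisms -/

/-- The unique map from the empty graph. -/
def oHom (X : GraphCat) : O ⟶ X :=
  ⟨fun x => x.elim, by intro u v h; exact u.elim⟩

def oPt : O ⟶ pt := oHom pt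

/-- A point of `X`, as a map from the one-point graph. -/
def ptHom {X : GraphCat} (x : X.V) : pt ⟶ X :=
  ⟨fun _ => x, by intro u v h; exact h.elim⟩

/-- The unique map to the one-point graph. -/
def toPt (X : GraphCat) : X ⟶ pt :=
  ⟨fun _ => PUnit.unit, by intro u v h; exact Or.inl rfl⟩

def in0 : pt ⟶ D2 := ⟨fun _ => false, by intro u v h; exact h.elim⟩
def in1 : pt ⟶ D2 := ⟨fun _ => true, by intro u v h; exact h.elim⟩

/-- A map out of the two-point discrete graph. -/
def d2Hom {X : GraphCat} (x y : X.V) : D2 ⟶ X :=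
  ⟨fun (b : Bool) => if b then y else x, by intro u v h; exact h.elim⟩

/-- The two endpoints of the path `I_m`. -/
def κHom (m : ℕ) : D2 ⟶ IM m := d2Hom (0 : Fin (m + 1)) (Fin.last m)

/-- The path `I_m` included in the infinite path `ℤ`. -/
def ωHom (m : ℕ) : IM m ⟶ ZY where
  toFun := fun (t : Fin (m + 1)) => ((t : ℕ) : ℤ)
  isGraphMap := by
    intro a b h
    have h' := pathG_adj_iff.mp h
    dsimp only
    rcases h' with h | h
    · exact Or.inr (zAdj_iff.mpr (Or.inl (by exact_mod_cast h)))
    · exact Or.inr (zAdj_iff.mpr (Or.inr (by exact_mod_cast h)))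

/-- The diagonal `ℤ → ℤ × ℤ`. -/
def δHom : ZY ⟶ ZY2 where
  toFun a := (a, a)
  isGraphMap := by
    intro a b h
    have hne : a ≠ b := zAdj_ne (zAdj_iff.mp h)
    exact Or.inr ⟨⟨Or.inr h, Or.inr h⟩, fun hc => hne (congrArg Prod.fst hc)⟩

/-- Pairing a map to `ℤ` with the constant `0`, valued in the product graph. -/
def pairHom {A : GraphCat} (f : A ⟶ ZY) : A ⟶ ZY2 where
  toFun a := (f.toFun a, 0)
  isGraphMap := by
    intro a b h
    rcases f.isGraphMap h with he | ha
    · exact Or.inl (congrArg (fun z : ℤ => ((z, 0) : ℤ × ℤ)) he)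
    · refine Or.inr ⟨⟨Or.inr ha, Or.inl rfl⟩, ?_⟩
      intro hc
      have h1 : f.toFun a = f.toFun b := congrArg Prod.fst hc
      exact zAdj_ne (zAdj_iff.mp ha) h1

/-! #### Generalities on graph homs -/

lemma hom_ext {X Y : GraphCat} {f g : X ⟶ Y} (h : ∀ x, f.toFun x = g.toFun x) : f = g := by
  exact GraphHom.ext (funext h)

lemma hom_congr {X Y : GraphCat} {f g : X ⟶ Y} (h : f = g) (x : X.V) :
    f.toFun x = g.toFun x := by rw [h]

/-! #### Basic A-homotopy facts -/

lemma ahomotopic_refl {X Y : GraphCat} (f : X ⟶ Y) : AHomotopic f f := by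
  refine ⟨0, fun p => f.toFun p.1, ?_, fun v => rfl, fun v => rfl⟩
  intro x y hxy
  rcases SimpleGraph.boxProd_adj.mp hxy with ⟨hG, -⟩ | ⟨hH, -⟩
  · exact f.isGraphMap hG
  · exfalso
    have hH' := pathG_adj_iff.mp hH
    clear hH
    rename' hH' => hH
    have h1 := x.2.isLt
    have h2 := y.2.isLt
    omega

lemma id_ahe (X : GraphCat) : IsAHomotopyEquiv (𝟙 X) :=
  ⟨𝟙 X, by rw [Category.comp_id]; exact ahomotopic_refl _,
    by rw [Category.comp_id]; exact ahomotopic_refl _⟩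

/-- Clamping map used to contract the path graph. -/
def clampF {m : ℕ} (a t : Fin (m + 1)) : Fin (m + 1) :=
  if (a : ℕ) ≤ (t : ℕ) then a else t

lemma clampF_graph {m : ℕ} {a b s t : Fin (m + 1)}
    (h : ((a : ℕ) + 1 = (b : ℕ) ∨ (b : ℕ) + 1 = (a : ℕ)) ∧ s = t ∨
      ((s : ℕ) + 1 = (t : ℕ) ∨ (t : ℕ) + 1 = (s : ℕ)) ∧ a = b) :
    clampF a s = clampF b t ∨
      ((clampF a s : ℕ) + 1 = (clampF b t : ℕ) ∨ (clampF b t : ℕ) + 1 = (clampF a s : ℕ)) := by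
  unfold clampF
  rcases h with ⟨h1, rfl⟩ | ⟨h1, rfl⟩ <;> split_ifs with g1 g2 g2 <;>
    first
      | exact Or.inl (Fin.ext (by omega))
      | exact Or.inr (by omega)

lemma clampF_zero {m : ℕ} (v : Fin (m + 1)) : clampF v 0 = 0 := by
  unfold clampF
  split_ifs with h
  · exact Fin.ext (by simp at h ⊢; omega)
  · rfl

lemma clampF_last {m : ℕ} (v : Fin (m + 1)) : clampF v (Fin.last m) = v := by
  unfold clampF
  split_ifs with h
  · rfl
  · exact absurd (by have := v.isLt; simp [Fin.val_last]; omega) h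

/-- The path graph `I_m` is contractible: the projection to the point is an
A-homotopy equivalence. -/
lemma pi_ahe (m : ℕ) : IsAHomotopyEquiv (toPt (IM m)) := by
  refine ⟨ptHom (0 : Fin (m + 1)), ?_, ?_⟩
  · refine ⟨m, fun p => clampF p.1 p.2, ?_, ?_, ?_⟩
    · intro x y hxy
      rcases SimpleGraph.boxProd_adj.mp hxy with ⟨hG, ht⟩ | ⟨hH, hv⟩
      · exact clampF_graph (Or.inl ⟨pathG_adj_iff.mp hG, ht⟩)
      · exact clampF_graph (Or.inr ⟨pathG_adj_iff.mp hH, hv⟩)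
    · exact fun v => clampF_zero v
    · exact fun v => clampF_last v
  · have he : (ptHom (0 : Fin (m + 1))) ≫ toPt (IM m) = 𝟙 pt := hom_ext fun x => rfl
    rw [he]
    exact ahomotopic_refl _

/-! #### Walks in `ℤ` coming from homotopies -/

lemma int_walk {L : ℕ} (β : Fin (L + 1) → ℤ)
    (hstep : ∀ s t : Fin (L + 1), (s : ℕ) + 1 = (t : ℕ) →
      β s = β t ∨ zGraph.Adj (β s) (β t)) :
    |β (Fin.last L) - β 0| ≤ (L : ℤ) := by
  suffices key : ∀ n (hn : n ≤ L), |β ⟨n, Nat.lt_succ_of_le hn⟩ - β 0| ≤ (n : ℤ) by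
    have h := key L le_rfl
    have e : (⟨L, Nat.lt_succ_of_le le_rfl⟩ : Fin (L + 1)) = Fin.last L := rfl
    rwa [e] at h
  intro n
  induction n with
  | zero =>
    intro hn
    have e : (⟨0, Nat.lt_succ_of_le hn⟩ : Fin (L + 1)) = 0 := Fin.ext (by simp)
    rw [e]; simp
  | succ k ih =>
    intro hn
    have hk : k ≤ L := by omega
    have h2 := ih hk
    have h1 := hstep ⟨k, Nat.lt_succ_of_le hk⟩ ⟨k + 1, Nat.lt_succ_of_le hn⟩ rfl
    rw [zAdj_iff] at h1
    rw [abs_le] at h2 ⊢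
    omega

/-! #### Consequences of the model structure axioms -/

section WithModel

variable (M : ModelStructure GraphCat)

/-- The retract argument: a map with the left lifting property against all trivial
fibrations is a cofibration. -/
lemma cof_of_llp {A B : GraphCat} (m : A ⟶ B)
    (h : ∀ {X Y : GraphCat} (p : X ⟶ Y), M.fib p → M.weq p →
      ∀ (u : A ⟶ X) (v : B ⟶ Y), u ≫ p = m ≫ v → ∃ l : B ⟶ X, m ≫ l = u ∧ l ≫ p = v) :
    M.cof m := by
  obtain ⟨Z, c, t, hc, htf, htw, heq⟩ := M.fact_cof_trivFib m
  obtain ⟨l, hl1, hl2⟩ := h t htf htw c (𝟙 B) (by rw [Category.comp_id]; exact heq)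
  exact M.cof_retract m c
    ⟨𝟙 A, 𝟙 A, l, t, Category.id_comp _, hl2,
      by rw [Category.id_comp, hl1], by rw [Category.id_comp]; exact heq⟩ hc

/-- The map from the empty graph to the point is a cofibration: it is a retract of the
cofibration part of any factorization of itself, since the middle object is nonempty. -/
lemma cof_oPt (hW : ∀ {X Y : GraphCat} (f : X ⟶ Y), M.weq f ↔ IsAHomotopyEquiv f) :
    M.cof oPt := by
  obtain ⟨Z, i, p, hic, hpf, hpw, heq⟩ := M.fact_cof_trivFib oPt
  obtain ⟨g0, -, -⟩ := (hW p).mp hpw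
  refine M.cof_retract oPt i
    ⟨𝟙 O, 𝟙 O, g0, p, Category.id_comp _, hom_ext fun x => rfl,
      hom_ext fun x => x.elim, ?_⟩ hic
  rw [Category.id_comp]; exact heq

/-- Every trivial fibration is surjective on vertices, in the strong, pointed sense. -/
lemma point_lift (hW : ∀ {X Y : GraphCat} (f : X ⟶ Y), M.weq f ↔ IsAHomotopyEquiv f)
    {X' Y' : GraphCat} (p : X' ⟶ Y') (hf : M.fib p) (hw : M.weq p)
    (v : pt ⟶ Y') : ∃ l : pt ⟶ X', l ≫ p = v := by
  obtain ⟨l, -, h2⟩ := M.lift_cof_trivFib oPt p (cof_oPt M hW) hf hw (oHom X') v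
    (hom_ext fun x => x.elim)
  exact ⟨l, h2⟩

/-- The inclusion of one point into the two-point discrete graph has the LLP against
all trivial fibrations. -/
lemma in0_llp (hW : ∀ {X Y : GraphCat} (f : X ⟶ Y), M.weq f ↔ IsAHomotopyEquiv f)
    {X' Y' : GraphCat} (p : X' ⟶ Y') (hf : M.fib p) (hw : M.weq p)
    (u : pt ⟶ X') (v : D2 ⟶ Y') (hsq : u ≫ p = in0 ≫ v) :
    ∃ l : D2 ⟶ X', in0 ≫ l = u ∧ l ≫ p = v := by
  obtain ⟨l1, hl1⟩ := point_lift M hW p hf hw (in1 ≫ v)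
  refine ⟨⟨fun (b : Bool) => if b then l1.toFun PUnit.unit else u.toFun PUnit.unit,
    by intro a b h; exact h.elim⟩, ?_, ?_⟩
  · exact hom_ext fun x => rfl
  · apply hom_ext
    intro b
    cases b
    · exact hom_congr hsq PUnit.unit
    · exact hom_congr hl1 PUnit.unit

lemma cof_in0 (hW : ∀ {X Y : GraphCat} (f : X ⟶ Y), M.weq f ↔ IsAHomotopyEquiv f) :
    M.cof in0 :=
  cof_of_llp M in0 (fun p hf hw u v hsq => in0_llp M hW p hf hw u v hsq)

end WithModel

end NoModelAux

open NoModelAux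

/-- There is no model structure on the category of simple graphs whose weak equivalences are
exactly the A-homotopy equivalences. -/
theorem no_model_structure_on_graphs :
    ¬ ∃ M : ModelStructure GraphCat,
        ∀ {X Y : GraphCat} (f : X ⟶ Y), M.weq f ↔ IsAHomotopyEquiv f := by
  rintro ⟨MS, hW⟩
  classical
  -- Step 1: a "path object" for the infinite path graph ℤ.
  obtain ⟨P, w, q, hwc, hww, hqf, hwq⟩ := MS.fact_trivCof_fib δHom
  -- From `w` being a weak equivalence, extract a homotopy inverse and a homotopy
  -- `α : w ∘ g ≃ id_P` of some fixed length `L`.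
  obtain ⟨g, -, hgw⟩ := (hW w).mp hww
  obtain ⟨L, α, hα, hα0, hα1⟩ := hgw
  set Mn := 2 * L + 1 with hMn
  -- Step 2: factor the two-endpoint inclusion into the path `I_Mn`.
  obtain ⟨C, c', τ, hc', hτf, hτw, hcτ⟩ := MS.fact_cof_trivFib (κHom Mn)
  -- `e0 := in0 ≫ c'` is a cofibration ...
  have cof_e0 : MS.cof (in0 ≫ c') := by
    apply cof_of_llp MS
    intro X' Y' p hf hw u v hsq
    obtain ⟨l1, h11, h12⟩ := in0_llp MS hW p hf hw u (c' ≫ v)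
      (by rw [hsq, Category.assoc])
    obtain ⟨l2, h21, h22⟩ := MS.lift_cof_trivFib c' p hc' hf hw l1 v h12
    refine ⟨l2, ?_, h22⟩
    rw [Category.assoc, h21]
    exact h11
  -- ... and a weak equivalence (2-out-of-3, since `I_Mn` is contractible).
  have hπ : MS.weq (toPt (IM Mn)) := (hW _).mpr (pi_ahe Mn)
  have hσ : MS.weq (τ ≫ toPt (IM Mn)) := MS.weq_comp τ _ hτw hπ
  have hcompid : (in0 ≫ c') ≫ (τ ≫ toPt (IM Mn)) = 𝟙 pt := hom_ext fun x => rfl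
  have weq_e0 : MS.weq (in0 ≫ c') :=
    MS.weq_of_comp_right _ _ hσ (by rw [hcompid]; exact (hW _).mpr (id_ahe pt))
  -- Step 3: lift `e0` against the fibration `q`.
  set v : C ⟶ ZY2 := pairHom (τ ≫ ωHom Mn) with hv
  have hsq : (ptHom (w.toFun (0 : ℤ))) ≫ q = (in0 ≫ c') ≫ v := by
    apply hom_ext
    intro x
    have h1 : q.toFun (w.toFun (0 : ℤ)) = ((0 : ℤ), (0 : ℤ)) := hom_congr hwq (0 : ℤ)
    have h2 : τ.toFun (c'.toFun false) = (0 : Fin (Mn + 1)) := hom_congr hcτ false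
    show q.toFun (w.toFun (0 : ℤ)) = ((ωHom Mn).toFun (τ.toFun (c'.toFun false)), 0)
    rw [h1, h2]
    show ((0 : ℤ), (0 : ℤ)) = ((((0 : Fin (Mn + 1)) : ℕ) : ℤ), (0 : ℤ))
    simp
  obtain ⟨l, -, hl2⟩ := MS.lift_trivCof_fib (in0 ≫ c') q cof_e0 weq_e0 hqf
    (ptHom (w.toFun (0 : ℤ))) v hsq
  -- The vertex of `P` sitting over `(Mn, 0)`.
  set h₀ := l.toFun (c'.toFun true) with hh₀
  have hqh : q.toFun h₀ = ((Mn : ℤ), (0 : ℤ)) := by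
    have h3 : τ.toFun (c'.toFun true) = Fin.last Mn := hom_congr hcτ true
    have h4 : q.toFun (l.toFun (c'.toFun true)) = v.toFun (c'.toFun true) :=
      hom_congr hl2 (c'.toFun true)
    rw [hh₀, h4]
    show ((ωHom Mn).toFun (τ.toFun (c'.toFun true)), (0 : ℤ)) = _
    rw [h3]
    show ((((Fin.last Mn : Fin (Mn + 1)) : ℕ) : ℤ), (0 : ℤ)) = _
    simp
  -- Step 4: the homotopy `α` gives short walks in `ℤ`, contradiction.
  have end1 : α (h₀, Fin.last L) = h₀ := hα1 h₀
  have end0 : α (h₀, (0 : Fin (L + 1))) = w.toFun (g.toFun h₀) := hα0 h₀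
  have hq2 : q.toFun (w.toFun (g.toFun h₀)) = (g.toFun h₀, g.toFun h₀) :=
    hom_congr hwq (g.toFun h₀)
  have stepFin : ∀ s t : Fin (L + 1), (s : ℕ) + 1 = (t : ℕ) →
      ((q.toFun (α (h₀, s))).1 = (q.toFun (α (h₀, t))).1 ∨
        zGraph.Adj (q.toFun (α (h₀, s))).1 (q.toFun (α (h₀, t))).1) ∧
      ((q.toFun (α (h₀, s))).2 = (q.toFun (α (h₀, t))).2 ∨
        zGraph.Adj (q.toFun (α (h₀, s))).2 (q.toFun (α (h₀, t))).2) := by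
    intro s t hst
    have adj : ((P.graph.boxProd (pathG L))).Adj (h₀, s) (h₀, t) :=
      SimpleGraph.boxProd_adj.mpr (Or.inr ⟨pathG_adj_iff.mpr (Or.inl hst), rfl⟩)
    rcases hα adj with he | ha
    · constructor <;> exact Or.inl (by rw [he])
    · rcases q.isGraphMap ha with he | ha2
      · constructor <;> exact Or.inl (by rw [he])
      · obtain ⟨⟨c1, c2⟩, -⟩ := z2Adj_iff.mp ha2
        exact ⟨c1, c2⟩
  have w0 := int_walk (fun t => (q.toFun (α (h₀, t))).1) (fun s t hst => (stepFin s t hst).1)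
  have w1 := int_walk (fun t => (q.toFun (α (h₀, t))).2) (fun s t hst => (stepFin s t hst).2)
  rw [end1, hqh, end0, hq2] at w0 w1
  obtain ⟨z0, hz0⟩ : ∃ z : ℤ, g.toFun h₀ = z := ⟨g.toFun h₀, rfl⟩
  rw [hz0] at w0 w1
  dsimp only at w0 w1
  rw [abs_le] at w0 w1
  omega
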